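/- For any two locally fair fractional orientations of a weighted undirected graph G, every vertex has the same out-degree in both orientations. That is, if g and g' are the out-degree functions of two locally fair fractional orientations of G, then g(u) = g'(u) for all vertices u. -/

import Mathlib

open Finset Real

noncomputable section

variable {V : Type*}

/-- The out-degree of `u` in a fractional orientation `o`. -/
def outdeg [Fintype V] (o : V → V → ℝ) (u : V) : ℝ := ∑ x : V, o u x

/-- `o` is a fractional orientation of the weighted graph `(G, w)`:
nonnegative values on directed edge-halves, supported on edges, summing to the edge weight. -/
def IsOrientation [Fintype V] (G : SimpleGraph V) (w : V → V → ℝ) (o : V → V → ℝ) : Prop :=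
  (∀ u v, 0 ≤ o u v) ∧ (∀ u v, ¬ G.Adj u v → o u v = 0) ∧
    (∀ u v, G.Adj u v → o u v + o v u = w u v)

/-- A fractional orientation is locally fair if positive weight on `u → v`
implies `g(u) ≤ g(v)`. -/
def LocallyFair [Fintype V] (o : V → V → ℝ) : Prop :=
  ∀ u v, 0 < o u v → outdeg o u ≤ outdeg o v

/-- A fractional orientation is `η`-fair if positive weight on `u → v`
implies `g(u) ≤ (1+η)·g(v)`. -/
def EtaFair [Fintype V] (η : ℝ) (o : V → V → ℝ) : Prop :=
  ∀ u v, 0 < o u v → outdeg o u ≤ (1 + η) * outdeg o v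

/-- Total weight of edges of `G` inside the vertex set `S`. -/
def edgeWeight [Fintype V] (G : SimpleGraph V) [DecidableRel G.Adj] (w : V → V → ℝ)
    (S : Finset V) : ℝ :=
  (∑ u ∈ S, ∑ v ∈ S, if G.Adj u v then w u v else 0) / 2

/-- Density of the subgraph induced on `S`. -/
def densityOn [Fintype V] (G : SimpleGraph V) [DecidableRel G.Adj] (w : V → V → ℝ)
    (S : Finset V) : ℝ :=
  edgeWeight G w S / S.card

lemma inner_sum_eq [Fintype V] (G : SimpleGraph V) (w o : V → V → ℝ)
    (ho : IsOrientation G w o) (S : Finset V) [DecidableRel G.Adj] :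
    2 * ∑ u ∈ S, ∑ v ∈ S, o u v
      = ∑ u ∈ S, ∑ v ∈ S, (if G.Adj u v then w u v else 0) := by
  have hswap : ∑ u ∈ S, ∑ v ∈ S, o u v = ∑ u ∈ S, ∑ v ∈ S, o v u := Finset.sum_comm
  calc 2 * ∑ u ∈ S, ∑ v ∈ S, o u v
      = ∑ u ∈ S, ∑ v ∈ S, o u v + ∑ u ∈ S, ∑ v ∈ S, o v u := by rw [← hswap]; ring
    _ = ∑ u ∈ S, ∑ v ∈ S, (o u v + o v u) := by
        rw [← Finset.sum_add_distrib]
        exact Finset.sum_congr rfl fun u _ => (Finset.sum_add_distrib).symm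
    _ = ∑ u ∈ S, ∑ v ∈ S, (if G.Adj u v then w u v else 0) := by
        refine Finset.sum_congr rfl fun u _ => Finset.sum_congr rfl fun v _ => ?_
        by_cases h : G.Adj u v
        · simp [h, ho.2.2 u v h]
        · have h' : ¬ G.Adj v u := fun hh => h hh.symm
          simp [h, ho.2.1 u v h, ho.2.1 v u h']

lemma aux_onesided [Fintype V] (G : SimpleGraph V) (w : V → V → ℝ)
    (o o' : V → V → ℝ)
    (ho : IsOrientation G w o) (ho' : IsOrientation G w o')
    (hf : LocallyFair o) (u : V)
    (hu : outdeg o' u < outdeg o u)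
    (hmax : ∀ v, outdeg o v ≠ outdeg o' v →
      max (outdeg o v) (outdeg o' v) ≤ outdeg o u) : False := by
  classical
  set M := outdeg o u with hM
  set S : Finset V := Finset.univ.filter (fun v => M ≤ outdeg o v) with hS
  have huS : u ∈ S := by simp [hS]; exact le_rfl
  -- S is closed under o
  have hclosed : ∀ v ∈ S, ∀ x, 0 < o v x → x ∈ S := by
    intro v hv x hpos
    have hvM : M ≤ outdeg o v := by simpa [hS] using hv
    have := hf v x hpos
    simp only [hS, Finset.mem_filter, Finset.mem_univ, true_and]
    linarith
  -- sum of outdeg o over S equals the inner sum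
  have hsum : ∑ v ∈ S, outdeg o v = ∑ a ∈ S, ∑ b ∈ S, o a b := by
    refine Finset.sum_congr rfl fun v hv => ?_
    unfold outdeg
    rw [← Finset.sum_subset (Finset.subset_univ S)]
    intro x _ hx
    rcases lt_or_eq_of_le (ho.1 v x) with h | h
    · exact absurd (hclosed v hv x h) hx
    · exact h.symm
  -- sum of outdeg o' over S is at least the inner sum for o'
  have hsum' : ∑ a ∈ S, ∑ b ∈ S, o' a b ≤ ∑ v ∈ S, outdeg o' v := by
    refine Finset.sum_le_sum fun v _ => ?_
    unfold outdeg
    exact Finset.sum_le_sum_of_subset_of_nonneg (Finset.subset_univ S)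
      (fun x _ _ => ho'.1 v x)
  -- the two inner sums are equal
  have hinner : ∑ a ∈ S, ∑ b ∈ S, o a b = ∑ a ∈ S, ∑ b ∈ S, o' a b := by
    have h1 := inner_sum_eq G w o ho S
    have h2 := inner_sum_eq G w o' ho' S
    linarith
  have hle : ∑ v ∈ S, outdeg o v ≤ ∑ v ∈ S, outdeg o' v := by
    rw [hsum, hinner]; exact hsum'
  -- but pointwise on S, outdeg o' ≤ outdeg o, strictly at u
  have hlt : ∑ v ∈ S, outdeg o' v < ∑ v ∈ S, outdeg o v := by
    refine Finset.sum_lt_sum (fun v hv => ?_) ⟨u, huS, hu⟩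
    by_contra hcon
    push_neg at hcon
    have hne : outdeg o v ≠ outdeg o' v := ne_of_lt hcon
    have := hmax v hne
    have hvM : M ≤ outdeg o v := by simpa [hS] using hv
    have : outdeg o' v ≤ M := le_trans (le_max_right _ _) this
    linarith
  linarith

/-- any two locally fair fractional orientations of a weighted graph
give every vertex the same out-degree. -/
theorem locally_fair_outdeg_unique [Fintype V] (G : SimpleGraph V) (w : V → V → ℝ)
    (hwpos : ∀ u v, G.Adj u v → 0 < w u v) (hwsymm : ∀ u v, w u v = w v u)
    (o o' : V → V → ℝ)
    (ho : IsOrientation G w o) (ho' : IsOrientation G w o')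
    (hf : LocallyFair o) (hf' : LocallyFair o') :
    ∀ u : V, outdeg o u = outdeg o' u := by
  classical
  by_contra hcon
  push_neg at hcon
  obtain ⟨u₀, hu₀⟩ := hcon
  set D : Finset V := Finset.univ.filter (fun v => outdeg o v ≠ outdeg o' v) with hD
  have hDne : D.Nonempty := ⟨u₀, by simp [hD, hu₀]⟩
  obtain ⟨u, huD, humax⟩ := Finset.exists_max_image D
    (fun v => max (outdeg o v) (outdeg o' v)) hDne
  have hune : outdeg o u ≠ outdeg o' u := by simpa [hD] using huD
  rcases lt_or_gt_of_ne hune with h | h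
  · -- outdeg o u < outdeg o' u : swap roles
    have hmaxeq : max (outdeg o u) (outdeg o' u) = outdeg o' u := max_eq_right h.le
    refine aux_onesided G w o' o ho' ho hf' u h (fun v hv => ?_)
    have hvD : v ∈ D := by simp only [hD, Finset.mem_filter, Finset.mem_univ, true_and]; exact fun hh => hv hh.symm
    have := humax v hvD
    rw [hmaxeq] at this
    rw [max_comm]
    exact this
  · have hmaxeq : max (outdeg o u) (outdeg o' u) = outdeg o u := max_eq_left h.le
    refine aux_onesided G w o o' ho ho' hf u h (fun v hv => ?_)
    have hvD : v ∈ D := by simp [hD, hv]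
    have := humax v hvD
    rw [hmaxeq] at this
    exact this
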